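/- Let m ≥ 1 and let γ₁,…,γ_m, α, β be nonzero complex numbers with γ_k ≠ 1 for all k and α ∉ {∏_{n∈N} γ_n : N ⊆ {1,…,m}}, β ∉ {∏_{n∈N} γ_n : N ⊆ {1,…,m}}. For I ⊆ {1,…,m} and k ∈ I define Δ'_I as the formal linear combination Δ'_I = αβ ∏_{j∉I} (γ_j−1)/γ_j · Σ_{N⊆I} [∏_{n∈N} γ_n / ((α−∏_{n∈N}γ_n)(β−∏_{n∈N}γ_n))] e_N in the free vector space with basis {e_N}_{N⊆{1,…,m}}. Let T_k be the linear map with T_k(e_N) = γ_k^{−1} e_N if k ∈ N and T_k(e_N) = e_N if k ∉ N. Then T_k(Δ'_I) = γ_k^{−1} Δ'_I + Δ'_{I∖{k}} if k ∈ I, and T_k(Δ'_I) = Δ'_I if k ∉ I. -/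
import Mathlib


theorem stmt15 (m : ℕ) (hm : 1 ≤ m) (α β : ℂ) (γ : Fin m → ℂ)
    (hα0 : α ≠ 0) (hβ0 : β ≠ 0) (hγ0 : ∀ k, γ k ≠ 0)
    (hα : ∀ N : Finset (Fin m), α ≠ ∏ n ∈ N, γ n)
    (hβ : ∀ N : Finset (Fin m), β ≠ ∏ n ∈ N, γ n)
    (k : Fin m)
    (T : Module.End ℂ (Finset (Fin m) → ℂ))
    (hT : ∀ N : Finset (Fin m),
      T (Pi.single N 1) =
        (if k ∈ N then (γ k)⁻¹ else 1 : ℂ) •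
          (Pi.single N 1 : Finset (Fin m) → ℂ))
    (Δ' : Finset (Fin m) → (Finset (Fin m) → ℂ))
    (hΔ : ∀ I : Finset (Fin m),
      Δ' I = (α * β * ∏ j ∈ Iᶜ, (γ j - 1) / γ j) •
        ∑ N ∈ I.powerset,
          ((∏ n ∈ N, γ n) /
            ((α - ∏ n ∈ N, γ n) * (β - ∏ n ∈ N, γ n))) •
          (Pi.single N 1 : Finset (Fin m) → ℂ))
    (I : Finset (Fin m)) :
    (k ∈ I → T (Δ' I) = (γ k)⁻¹ • Δ' I + Δ' (I.erase k)) ∧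
    (k ∉ I → T (Δ' I) = Δ' I) := by
  set coeff : Finset (Fin m) → ℂ := fun N =>
    (∏ n ∈ N, γ n) / ((α - ∏ n ∈ N, γ n) * (β - ∏ n ∈ N, γ n)) with hcoeff
  constructor
  · intro hk
    set J := I.erase k with hJ
    have hkJ : k ∉ J := Finset.notMem_erase k I
    have hI : I = insert k J := (Finset.insert_erase hk).symm
    have hcompl : ∏ j ∈ Jᶜ, (γ j - 1) / γ j
        = ((γ k - 1) / γ k) * ∏ j ∈ Iᶜ, (γ j - 1) / γ j := by
      rw [hJ, Finset.compl_erase, Finset.prod_insert (by simp [hk])]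
    rw [hΔ I, hΔ J, map_smul, map_sum]
    simp only [map_smul, hT]
    rw [hcompl]
    rw [show I.powerset = (insert k J).powerset from by rw [← hI]]
    rw [Finset.sum_powerset_insert hkJ, Finset.sum_powerset_insert hkJ]
    have e1 : ∑ N ∈ J.powerset, coeff N •
        ((if k ∈ N then (γ k)⁻¹ else 1 : ℂ) • (Pi.single N 1 : Finset (Fin m) → ℂ))
        = ∑ N ∈ J.powerset, coeff N • (Pi.single N 1 : Finset (Fin m) → ℂ) := by
      refine Finset.sum_congr rfl fun N hN => ?_
      have : k ∉ N := fun h => hkJ (Finset.mem_powerset.mp hN h)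
      rw [if_neg this, one_smul]
    have e2 : ∑ N ∈ J.powerset, coeff (insert k N) •
        ((if k ∈ insert k N then (γ k)⁻¹ else 1 : ℂ) •
          (Pi.single (insert k N) 1 : Finset (Fin m) → ℂ))
        = (γ k)⁻¹ • ∑ N ∈ J.powerset, coeff (insert k N) •
            (Pi.single (insert k N) 1 : Finset (Fin m) → ℂ) := by
      rw [Finset.smul_sum]
      refine Finset.sum_congr rfl fun N hN => ?_
      rw [if_pos (Finset.mem_insert_self k N), smul_comm]
    rw [e1, e2]
    set A := ∑ N ∈ J.powerset, coeff N • (Pi.single N 1 : Finset (Fin m) → ℂ) with hA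
    set B := ∑ N ∈ J.powerset, coeff (insert k N) •
        (Pi.single (insert k N) 1 : Finset (Fin m) → ℂ) with hB
    have hP : (∏ x ∈ Iᶜ, γ x) ≠ 0 := Finset.prod_ne_zero_iff.mpr fun i _ => hγ0 i
    match_scalars
    · field_simp [hγ0 k]
      ring
    · ring
  · intro hk
    rw [hΔ I, map_smul, map_sum]
    congr 1
    refine Finset.sum_congr rfl fun N hN => ?_
    have : k ∉ N := fun h => hk (Finset.mem_powerset.mp hN h)
    rw [map_smul, hT N, if_neg this, one_smul]
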